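/- For any partition (λ_1,…,λ_n) of nonnegative integers, s_{(2λ_1+1,λ_1+λ_2+1,…,λ_1+λ_n+1,λ_1-λ_n,…,λ_1-λ_1)}(x_1,…,x_n,x_1^{-1},…,x_n^{-1}) = sp_{(λ_1,…,λ_n)}(x_1,…,x_n) · oe_{(λ_1+1,…,λ_n+1)}(x_1,…,x_n). -/

import Mathlib

noncomputable section

/-- The field ℚ(x_1,…,x_n) of rational functions. -/
abbrev K (n : ℕ) : Type := FractionRing (MvPolynomial (Fin n) ℚ)

/-- The variable x_i. -/
def X {n : ℕ} (i : Fin n) : K n :=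
  algebraMap (MvPolynomial (Fin n) ℚ) (K n) (MvPolynomial.X i)

/-- ∏_{i<j} (z_i + z_i⁻¹ - z_j - z_j⁻¹). -/
def xpairs {F : Type*} [Field F] {m : ℕ} (z : Fin m → F) : F :=
  ∏ i : Fin m, ∏ j : Fin m, if i < j then z i + (z i)⁻¹ - z j - (z j)⁻¹ else 1

/-- Bialternant Schur polynomial s_μ(z) = det(z_i^{μ_j+m-j}) / ∏_{i<j}(z_i - z_j). -/
def schur {F : Type*} [Field F] (m : ℕ) (μ : Fin m → ℤ) (z : Fin m → F) : F :=
  (Matrix.of fun i j : Fin m => z i ^ (μ j + m - 1 - (j : ℕ))).det /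
    ∏ i : Fin m, ∏ j : Fin m, if i < j then z i - z j else 1

/-- Symplectic character sp_λ(z) = det(z_i^{λ_j+n-j+1} - z_i^{-(λ_j+n-j+1)}) /
[∏_i(z_i - z_i⁻¹) ∏_{i<j}(z_i + z_i⁻¹ - z_j - z_j⁻¹)]. -/
def spC {F : Type*} [Field F] (n : ℕ) (lam : Fin n → ℤ) (z : Fin n → F) : F :=
  (Matrix.of fun i j : Fin n =>
      z i ^ (lam j + n - (j : ℕ)) - z i ^ (-(lam j + n - (j : ℕ)))).det /
    ((∏ i : Fin n, (z i - (z i)⁻¹)) * xpairs z)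

/-- Even orthogonal character oe_λ(z) = det(z_i^{λ_j+n-j} + z_i^{-(λ_j+n-j)}) /
[(1+δ_{λ_n,0}) ∏_{i<j}(z_i + z_i⁻¹ - z_j - z_j⁻¹)]. -/
def oeC {F : Type*} [Field F] (n : ℕ) (lam : Fin n → ℤ) (z : Fin n → F) : F :=
  (Matrix.of fun i j : Fin n =>
      z i ^ (lam j + n - 1 - (j : ℕ)) + z i ^ (-(lam j + n - 1 - (j : ℕ)))).det /
    ((if h : 0 < n then (if lam ⟨n - 1, by omega⟩ = 0 then 2 else 1) else 1) * xpairs z)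

open Matrix Finset Equiv

section Aux

/-- Block determinant identity: `det [[A,B],[B,A]] = det (A-B) * det (A+B)`. -/
private lemma det_fromBlocks_comm {R : Type*} [CommRing R] {m : Type*} [Fintype m]
    [DecidableEq m] (A B : Matrix m m R) :
    (Matrix.fromBlocks A B B A).det = (A - B).det * (A + B).det := by
  have h : Matrix.fromBlocks A B B A =
      Matrix.fromBlocks 1 (-1) 0 1 * Matrix.fromBlocks (A + B) 0 B (A - B) *
        Matrix.fromBlocks (1 : Matrix m m R) 1 0 1 := by
    rw [Matrix.fromBlocks_multiply, Matrix.fromBlocks_multiply]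
    congr 1 <;> simp
  rw [h, Matrix.det_mul, Matrix.det_mul, Matrix.det_fromBlocks_zero₂₁,
    Matrix.det_fromBlocks_zero₂₁, Matrix.det_fromBlocks_zero₁₂]
  simp [mul_comm]

/-- Reversing indices in a strict-upper-triangular double product. -/
private lemma prod_pairs_rev {M : Type*} [CommMonoid M] {m : ℕ} (g : Fin m → Fin m → M) :
    (∏ i : Fin m, ∏ j : Fin m, if i < j then g i j else 1)
      = ∏ i : Fin m, ∏ j : Fin m, if i < j then g j.rev i.rev else 1 := by
  have h1 : ∀ (Fi : Fin m → M), ∏ i, Fi i = ∏ i, Fi (Fin.rev i) :=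
    fun Fi => (Equiv.prod_comp Fin.revPerm Fi).symm
  calc (∏ i : Fin m, ∏ j : Fin m, if i < j then g i j else 1)
      = ∏ i : Fin m, ∏ j : Fin m, if i.rev < j.rev then g i.rev j.rev else 1 := by
        rw [h1 (fun i => ∏ j : Fin m, if i < j then g i j else 1)]
        exact Finset.prod_congr rfl fun i _ =>
          h1 (fun j => if i.rev < j then g i.rev j else 1)
    _ = ∏ i : Fin m, ∏ j : Fin m, if j < i then g i.rev j.rev else 1 := by
        refine Finset.prod_congr rfl fun i _ => Finset.prod_congr rfl fun j _ => ?_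
        simp only [Fin.rev_lt_rev]
    _ = ∏ i : Fin m, ∏ j : Fin m, if i < j then g j.rev i.rev else 1 := Finset.prod_comm

private lemma prod_ite_Ioi {M : Type*} [CommMonoid M] {m : ℕ} (i : Fin m) (f : Fin m → M) :
    (∏ j : Fin m, if i < j then f j else 1) = ∏ j ∈ Finset.Ioi i, f j := by
  rw [← Finset.prod_filter]
  congr 1
  ext j
  simp

/-- Permuting the points in a Vandermonde-type product multiplies it by the sign. -/
private lemma prod_pairs_perm {R : Type*} [CommRing R] {m : ℕ} (π : Equiv.Perm (Fin m))
    (z : Fin m → R) :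
    (∏ i : Fin m, ∏ j : Fin m, if i < j then z i - z j else 1)
      = ((Equiv.Perm.sign π : ℤ) : R) *
        ∏ i : Fin m, ∏ j : Fin m, if i < j then z (π i) - z (π j) else 1 := by
  have hs : ((Equiv.Perm.sign π : ℤ) : R) * ((Equiv.Perm.sign π : ℤ) : R) = 1 := by
    rw [← Int.cast_mul, ← Units.val_mul, Int.units_mul_self]; simp
  have hQP : ∀ v : Fin m → R, (∏ i : Fin m, ∏ j : Fin m, if i < j then v i - v j else 1)
      = (∏ i : Fin m, (-1 : R) ^ (Finset.Ioi i).card) *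
        ∏ i : Fin m, ∏ j ∈ Finset.Ioi i, (v j - v i) := by
    intro v
    rw [← Finset.prod_mul_distrib]
    refine Finset.prod_congr rfl fun i _ => ?_
    rw [prod_ite_Ioi]
    rw [← Finset.prod_const, ← Finset.prod_mul_distrib]
    exact Finset.prod_congr rfl fun j _ => by ring
  have hvp : Matrix.vandermonde (z ∘ π) = (Matrix.vandermonde z).submatrix π id := by
    ext i j; simp [Matrix.vandermonde]
  have hP : (∏ i : Fin m, ∏ j ∈ Finset.Ioi i, ((z ∘ π) j - (z ∘ π) i))
      = ((Equiv.Perm.sign π : ℤ) : R) * ∏ i : Fin m, ∏ j ∈ Finset.Ioi i, (z j - z i) := by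
    rw [← Matrix.det_vandermonde, ← Matrix.det_vandermonde, hvp, Matrix.det_permute]
  have h2 : (∏ i : Fin m, ∏ j : Fin m, if i < j then z (π i) - z (π j) else 1)
      = (∏ i : Fin m, (-1 : R) ^ (Finset.Ioi i).card) *
        (((Equiv.Perm.sign π : ℤ) : R) * ∏ i : Fin m, ∏ j ∈ Finset.Ioi i, (z j - z i)) := by
    rw [← hP]; exact hQP (z ∘ π)
  rw [hQP z, h2]
  set s : R := ((Equiv.Perm.sign π : ℤ) : R)
  set C : R := ∏ i : Fin m, (-1 : R) ^ (Finset.Ioi i).card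
  set P : R := ∏ i : Fin m, ∏ j ∈ Finset.Ioi i, (z j - z i)
  rw [show s * (C * (s * P)) = (s * s) * (C * P) from by ring, hs, one_mul]

/-- Splitting a double product over `γ ≃ α ⊕ β`. -/
private lemma prod2_split {M : Type*} [CommMonoid M] {α β γ : Type*} [Fintype α] [Fintype β]
    [Fintype γ] (e : α ⊕ β ≃ γ) (h : γ → γ → M) :
    (∏ i : γ, ∏ j : γ, h i j)
      = ((∏ i : α, ∏ j : α, h (e (Sum.inl i)) (e (Sum.inl j))) *
          ∏ i : α, ∏ j : β, h (e (Sum.inl i)) (e (Sum.inr j))) *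
        ((∏ i : β, ∏ j : α, h (e (Sum.inr i)) (e (Sum.inl j))) *
          ∏ i : β, ∏ j : β, h (e (Sum.inr i)) (e (Sum.inr j))) := by
  rw [← Equiv.prod_comp e (fun i => ∏ j : γ, h i j)]
  have hin : ∀ s : α ⊕ β, (∏ j : γ, h (e s) j) = ∏ t : α ⊕ β, h (e s) (e t) :=
    fun s => (Equiv.prod_comp e (fun j => h (e s) j)).symm
  calc (∏ s : α ⊕ β, ∏ j : γ, h (e s) j)
      = ∏ s : α ⊕ β, ∏ t : α ⊕ β, h (e s) (e t) := Finset.prod_congr rfl fun s _ => hin s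
    _ = _ := by
        rw [Fintype.prod_sum_type (fun s => ∏ t : α ⊕ β, h (e s) (e t))]
        congr 1
        · rw [← Finset.prod_mul_distrib]
          exact Finset.prod_congr rfl fun i _ =>
            Fintype.prod_sum_type (fun t => h (e (Sum.inl i)) (e t))
        · rw [← Finset.prod_mul_distrib]
          exact Finset.prod_congr rfl fun i _ =>
            Fintype.prod_sum_type (fun t => h (e (Sum.inr i)) (e t))

/-- Splitting a full double product into diagonal, upper and lower parts. -/
private lemma prod2_diag_split {M : Type*} [CommMonoid M] {m : ℕ} (f : Fin m → Fin m → M) :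
    (∏ i : Fin m, ∏ j : Fin m, f i j)
      = (∏ i : Fin m, f i i) *
        ((∏ i : Fin m, ∏ j : Fin m, if i < j then f i j else 1) *
          ∏ i : Fin m, ∏ j : Fin m, if i < j then f j i else 1) := by
  have key : ∀ i j : Fin m, f i j =
      (if i = j then f i j else 1) * ((if i < j then f i j else 1) *
        (if j < i then f i j else 1)) := by
    intro i j
    rcases lt_trichotomy i j with h | h | h
    · simp [h, h.ne, not_lt_of_gt h]
    · simp [h, lt_irrefl]
    · simp [h, (h.ne).symm, not_lt_of_gt h]
  calc (∏ i : Fin m, ∏ j : Fin m, f i j)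
      = ∏ i : Fin m, ∏ j : Fin m, ((if i = j then f i j else 1) *
          ((if i < j then f i j else 1) * (if j < i then f i j else 1))) :=
        Finset.prod_congr rfl fun i _ => Finset.prod_congr rfl fun j _ => key i j
    _ = (∏ i : Fin m, f i i) *
        ((∏ i : Fin m, ∏ j : Fin m, if i < j then f i j else 1) *
          ∏ i : Fin m, ∏ j : Fin m, if j < i then f i j else 1) := by
        simp only [Finset.prod_mul_distrib]
        congr 1
        exact Finset.prod_congr rfl fun i _ => by simp
    _ = _ := by
        congr 1
        congr 1
        exact Finset.prod_comm

end Aux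

/-- The main computation, over an arbitrary field, for arbitrary nonvanishing points. -/
private theorem key_schur_sp_oe {F : Type*} [Field F] {n : ℕ} (hn : 0 < n)
    (lam : Fin n → ℕ) (x : Fin n → F) (hx : ∀ i, x i ≠ 0)
    (μ : Fin (2 * n) → ℤ) (z : Fin (2 * n) → F)
    (hμ1 : ∀ j : Fin (2 * n), ∀ h : (j : ℕ) < n,
      μ j = (lam ⟨0, hn⟩ : ℤ) + lam ⟨j, h⟩ + 1)
    (hμ2 : ∀ j : Fin (2 * n), ∀ _ : ¬ (j : ℕ) < n,
      μ j = (lam ⟨0, hn⟩ : ℤ) - lam ⟨2 * n - 1 - (j : ℕ), (by have := j.isLt; omega : 2 * n - 1 - (j : ℕ) < n + 0)⟩)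
    (hz1 : ∀ i : Fin (2 * n), ∀ h : (i : ℕ) < n, z i = x ⟨i, h⟩)
    (hz2 : ∀ i : Fin (2 * n), ∀ _ : ¬ (i : ℕ) < n,
      z i = (x ⟨(i : ℕ) - n, (by have := i.isLt; omega : (i : ℕ) - n < n + 0)⟩)⁻¹) :
    schur (2 * n) μ z
      = spC n (fun j => (lam j : ℤ)) x * oeC n (fun j => (lam j : ℤ) + 1) x := by
  classical
  have hz0 : ∀ i, z i ≠ 0 := by
    intro i
    by_cases h : (i : ℕ) < n
    · rw [hz1 i h]; exact hx _
    · rw [hz2 i h]; exact inv_ne_zero (hx _)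
  have hz1' : ∀ (i : Fin (2 * n)) (k : Fin n), (i : ℕ) = (k : ℕ) → z i = x k := by
    intro i k hik
    have h : (i : ℕ) < n := hik ▸ k.isLt
    rw [hz1 i h]
    congr 1
    exact Fin.ext hik
  have hz2' : ∀ (i : Fin (2 * n)) (k : Fin n), (i : ℕ) = n + (k : ℕ) → z i = (x k)⁻¹ := by
    intro i k hik
    have h : ¬ (i : ℕ) < n := by omega
    rw [hz2 i h]
    congr 2
    exact Fin.ext (by simp only [Fin.val_mk]; omega)
  -- `lam` as a function on naturals, to ease index bookkeeping
  set L : ℕ → ℤ := fun m => if h : m < n then (lam ⟨m, h⟩ : ℤ) else 0 with hLdef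
  have hL : ∀ k : Fin n, (lam k : ℤ) = L (k : ℕ) := by
    intro k
    rw [hLdef]
    simp only [dif_pos k.isLt, Fin.eta]
  have hL0 : ∀ m : ℕ, 0 ≤ L m := by
    intro m
    rw [hLdef]
    dsimp only
    split <;> simp
  have hμ1' : ∀ j : Fin (2 * n), (j : ℕ) < n → μ j = L 0 + L (j : ℕ) + 1 := by
    intro j h
    rw [hμ1 j h, hL, hL]
  have hμ2' : ∀ j : Fin (2 * n), ¬ (j : ℕ) < n → μ j = L 0 - L (2 * n - 1 - (j : ℕ)) := by
    intro j h
    rw [hμ2 j h, hL, hL]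
  set a : Fin n → ℤ := fun j => (lam j : ℤ) + n - j with ha
  have ha' : ∀ k : Fin n, a k = L (k : ℕ) + n - (k : ℕ) := by
    intro k; rw [ha]; dsimp only; rw [hL]
  set A : Matrix (Fin n) (Fin n) F := Matrix.of fun i j => x i ^ a j with hA
  set B : Matrix (Fin n) (Fin n) F := Matrix.of fun i j => x i ^ (-a j) with hB
  set c : ℤ := L 0 + n with hc
  set fexp : Fin (2 * n) → ℤ := fun j =>
    if (j : ℕ) < n then L (j : ℕ) + n - (j : ℕ)
    else -(L (2 * n - 1 - (j : ℕ)) + n - ((2 * n - 1 - (j : ℕ) : ℕ) : ℤ)) with hfexp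
  -- the equivalence Fin n ⊕ Fin n ≃ Fin (2n)
  set e₀ : Fin n ⊕ Fin n ≃ Fin (2 * n) :=
    finSumFinEquiv.trans (finCongr (by omega)) with he₀
  have he0l : ∀ i : Fin n, ((e₀ (Sum.inl i)) : ℕ) = (i : ℕ) := by
    intro i; rw [he₀]; simp
  have he0r : ∀ i : Fin n, ((e₀ (Sum.inr i)) : ℕ) = n + (i : ℕ) := by
    intro i; rw [he₀]; simp; omega
  -- the permutation reversing the second half
  set ff : Fin (2 * n) → Fin (2 * n) := fun j =>
    if h : (j : ℕ) < n then j
    else (⟨3 * n - 1 - (j : ℕ), by have := j.isLt; omega⟩ : Fin (2 * n)) with hff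
  have hffval : ∀ j : Fin (2 * n),
      ((ff j : ℕ)) = if (j : ℕ) < n then (j : ℕ) else 3 * n - 1 - (j : ℕ) := by
    intro j
    simp only [hff]
    by_cases h : (j : ℕ) < n
    · rw [dif_pos h, if_pos h]
    · rw [dif_neg h, if_neg h]
  have hinv : Function.Involutive ff := by
    intro j
    apply Fin.ext
    simp only [hffval]
    have := j.isLt
    split_ifs <;> omega
  set π : Equiv.Perm (Fin (2 * n)) := Function.Involutive.toPerm _ hinv with hπdef
  have hπ : ∀ j : Fin (2 * n), π j = ff j := fun j => rfl
  have hπval : ∀ j : Fin (2 * n),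
      ((π j : ℕ)) = if (j : ℕ) < n then (j : ℕ) else 3 * n - 1 - (j : ℕ) := by
    intro j; rw [hπ]; exact hffval j
  set sπ : F := ((Equiv.Perm.sign π : ℤ) : F) with hsπ
  have hsπ2 : sπ * sπ = 1 := by
    rw [hsπ, ← Int.cast_mul, ← Units.val_mul, Int.units_mul_self]; simp
  have hsπ0 : sπ ≠ 0 := by
    intro h; rw [h, mul_zero] at hsπ2; exact zero_ne_one hsπ2
  -- values of z at block points
  have hzl : ∀ i : Fin n, z (e₀ (Sum.inl i)) = x i := fun i => hz1' _ i (he0l i)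
  have hzr : ∀ i : Fin n, z (e₀ (Sum.inr i)) = (x i)⁻¹ := fun i => hz2' _ i (he0r i)
  have hπl : ∀ i : Fin n, π (e₀ (Sum.inl i)) = e₀ (Sum.inl i) := by
    intro i
    apply Fin.ext
    rw [hπval, he0l, if_pos i.isLt]
  have hπrv : ∀ i : Fin n, ((π (e₀ (Sum.inr i))) : ℕ) = 2 * n - 1 - (i : ℕ) := by
    intro i
    rw [hπval, he0r]
    have := i.isLt
    rw [if_neg (by omega)]
    omega
  have hwl : ∀ i : Fin n, z (π (e₀ (Sum.inl i))) = x i := by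
    intro i; rw [hπl]; exact hzl i
  have hwr : ∀ i : Fin n, z (π (e₀ (Sum.inr i))) = (x i.rev)⁻¹ := by
    intro i
    refine hz2' _ i.rev ?_
    rw [hπrv, Fin.val_rev]
    have := i.isLt
    omega
  -- values of fexp at (permuted) block points
  have hfπl : ∀ j : Fin n, fexp (π (e₀ (Sum.inl j))) = a j := by
    intro j
    rw [hπl, hfexp]
    dsimp only
    rw [if_pos (by rw [he0l]; exact j.isLt), he0l, ha']
  have hfπr : ∀ j : Fin n, fexp (π (e₀ (Sum.inr j))) = -(a j) := by
    intro j
    have hv := hπrv j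
    have hj := j.isLt
    rw [hfexp]
    dsimp only
    rw [if_neg (by omega), hv, ha']
    have h2 : 2 * n - 1 - (2 * n - 1 - (j : ℕ)) = (j : ℕ) := by omega
    rw [h2]
  -- Step 1: numerator
  have hmat1 : (Matrix.of fun i j : Fin (2 * n) => z i ^ (μ j + (2 * n : ℕ) - 1 - (j : ℕ)))
      = Matrix.of fun i j : Fin (2 * n) =>
          (fun i => z i ^ c) i * ((Matrix.of fun i j : Fin (2 * n) => z i ^ fexp j) i j) := by
    ext i j
    simp only [Matrix.of_apply]
    rw [← zpow_add₀ (hz0 i)]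
    congr 1
    by_cases h : (j : ℕ) < n
    · rw [hμ1' j h, hc, hfexp]
      dsimp only
      rw [if_pos h]
      have := j.isLt
      push_cast
      ring
    · rw [hμ2' j h, hc, hfexp]
      dsimp only
      rw [if_neg h]
      have := j.isLt
      omega
  have hprodc : (∏ i : Fin (2 * n), z i ^ c) = 1 := by
    rw [← Equiv.prod_comp e₀ (fun i => z i ^ c),
      Fintype.prod_sum_type (fun s : Fin n ⊕ Fin n => z (e₀ s) ^ c),
      ← Finset.prod_mul_distrib]
    rw [Finset.prod_congr rfl (fun i _ => ?_), Finset.prod_const_one]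
    rw [hzl, hzr, _root_.inv_zpow, mul_inv_cancel₀ (zpow_ne_zero _ (hx i))]
  -- Step 2: the column-permuted matrix is a block matrix
  have hsub : (Matrix.of fun i j : Fin (2 * n) => z i ^ fexp j).submatrix id π
      = (Matrix.fromBlocks A B B A).submatrix e₀.symm e₀.symm := by
    ext i j
    obtain ⟨s, rfl⟩ := e₀.surjective i
    obtain ⟨t, rfl⟩ := e₀.surjective j
    simp only [Matrix.submatrix_apply, Matrix.of_apply, id_eq, Equiv.symm_apply_apply]
    rcases s with i' | i' <;> rcases t with j' | j'
    · rw [hzl, hfπl]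
      simp [Matrix.fromBlocks_apply₁₁, hA]
    · rw [hzl, hfπr]
      simp [Matrix.fromBlocks_apply₁₂, hB]
    · rw [hzr, hfπl]
      rw [_root_.inv_zpow, ← _root_.zpow_neg]
      simp [Matrix.fromBlocks_apply₂₁, hB]
    · rw [hzr, hfπr]
      rw [_root_.inv_zpow, ← _root_.zpow_neg, neg_neg]
      simp [Matrix.fromBlocks_apply₂₂, hA]
  have hdetG : (Matrix.of fun i j : Fin (2 * n) => z i ^ fexp j).det
      = sπ * ((A - B).det * (A + B).det) := by
    have h1 := Matrix.det_permute' π (Matrix.of fun i j : Fin (2 * n) => z i ^ fexp j)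
    rw [hsub, Matrix.det_submatrix_equiv_self, det_fromBlocks_comm] at h1
    calc (Matrix.of fun i j : Fin (2 * n) => z i ^ fexp j).det
        = (sπ * sπ) * (Matrix.of fun i j : Fin (2 * n) => z i ^ fexp j).det := by
          rw [hsπ2, one_mul]
      _ = sπ * (sπ * (Matrix.of fun i j : Fin (2 * n) => z i ^ fexp j).det) := by ring
      _ = sπ * ((A - B).det * (A + B).det) := by rw [hsπ, ← h1]
  -- Step 3: denominator
  have hlt_ll : ∀ i j : Fin n, (e₀ (Sum.inl i) < e₀ (Sum.inl j)) ↔ i < j := by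
    intro i j
    rw [Fin.lt_def, Fin.lt_def, he0l, he0l]
  have hlt_lr : ∀ i j : Fin n, e₀ (Sum.inl i) < e₀ (Sum.inr j) := by
    intro i j
    rw [Fin.lt_def, he0l, he0r]
    have := i.isLt
    omega
  have hlt_rl : ∀ i j : Fin n, ¬ (e₀ (Sum.inr i) < e₀ (Sum.inl j)) := by
    intro i j
    rw [Fin.lt_def, he0l, he0r]
    have := j.isLt
    omega
  have hlt_rr : ∀ i j : Fin n, (e₀ (Sum.inr i) < e₀ (Sum.inr j)) ↔ i < j := by
    intro i j
    rw [Fin.lt_def, Fin.lt_def, he0r, he0r]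
    omega
  have hV : (∏ i : Fin (2 * n), ∏ j : Fin (2 * n), if i < j then z i - z j else 1)
      = sπ * ((∏ i : Fin n, (x i - (x i)⁻¹)) * (xpairs x * xpairs x)) := by
    rw [prod_pairs_perm π z, ← hsπ]
    congr 1
    rw [prod2_split e₀ (fun i j => if i < j then z (π i) - z (π j) else 1)]
    have h11 : (∏ i : Fin n, ∏ j : Fin n,
        if e₀ (Sum.inl i) < e₀ (Sum.inl j)
          then z (π (e₀ (Sum.inl i))) - z (π (e₀ (Sum.inl j))) else 1)
        = ∏ i : Fin n, ∏ j : Fin n, if i < j then x i - x j else 1 := by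
      refine Finset.prod_congr rfl fun i _ => Finset.prod_congr rfl fun j _ => ?_
      exact if_congr (hlt_ll i j) (by rw [hwl, hwl]) rfl
    have h12 : (∏ i : Fin n, ∏ j : Fin n,
        if e₀ (Sum.inl i) < e₀ (Sum.inr j)
          then z (π (e₀ (Sum.inl i))) - z (π (e₀ (Sum.inr j))) else 1)
        = ∏ i : Fin n, ∏ j : Fin n, (x i - (x j)⁻¹) := by
      refine Finset.prod_congr rfl fun i _ => ?_
      rw [← Equiv.prod_comp Fin.revPerm (fun j => x i - (x j)⁻¹)]
      refine Finset.prod_congr rfl fun j _ => ?_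
      rw [if_pos (hlt_lr i j), hwl, hwr, Fin.revPerm_apply]
    have h21 : (∏ i : Fin n, ∏ j : Fin n,
        if e₀ (Sum.inr i) < e₀ (Sum.inl j)
          then z (π (e₀ (Sum.inr i))) - z (π (e₀ (Sum.inl j))) else 1) = 1 := by
      rw [Finset.prod_congr rfl (fun i _ => Finset.prod_congr rfl fun j _ =>
        if_neg (hlt_rl i j))]
      simp
    have h22 : (∏ i : Fin n, ∏ j : Fin n,
        if e₀ (Sum.inr i) < e₀ (Sum.inr j)
          then z (π (e₀ (Sum.inr i))) - z (π (e₀ (Sum.inr j))) else 1)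
        = ∏ i : Fin n, ∏ j : Fin n, if i < j then (x j)⁻¹ - (x i)⁻¹ else 1 := by
      have step1 : (∏ i : Fin n, ∏ j : Fin n,
          if e₀ (Sum.inr i) < e₀ (Sum.inr j)
            then z (π (e₀ (Sum.inr i))) - z (π (e₀ (Sum.inr j))) else 1)
          = ∏ i : Fin n, ∏ j : Fin n, if i < j then (x i.rev)⁻¹ - (x j.rev)⁻¹ else 1 := by
        refine Finset.prod_congr rfl fun i _ => Finset.prod_congr rfl fun j _ => ?_
        exact if_congr (hlt_rr i j) (by rw [hwr, hwr]) rfl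
      rw [step1, prod_pairs_rev (fun i j => (x i.rev)⁻¹ - (x j.rev)⁻¹)]
      simp only [Fin.rev_rev]
    rw [h11, h12, h21, h22, one_mul]
    rw [prod2_diag_split (fun i j => x i - (x j)⁻¹)]
    have hfour : (∏ i : Fin n, ∏ j : Fin n, if i < j then x i - x j else 1) *
        ((∏ i : Fin n, ∏ j : Fin n, if i < j then x i - (x j)⁻¹ else 1) *
          ((∏ i : Fin n, ∏ j : Fin n, if i < j then x j - (x i)⁻¹ else 1) *
            (∏ i : Fin n, ∏ j : Fin n, if i < j then (x j)⁻¹ - (x i)⁻¹ else 1)))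
        = xpairs x * xpairs x := by
      rw [xpairs]
      simp only [← Finset.prod_mul_distrib]
      refine Finset.prod_congr rfl fun i _ => Finset.prod_congr rfl fun j _ => ?_
      by_cases h : i < j
      · simp only [if_pos h]
        have hxi := hx i
        have hxj := hx j
        field_simp
        ring
      · simp [h]
    linear_combination (∏ i : Fin n, (x i - (x i)⁻¹)) * hfour
  -- matching the sp and oe matrices
  have hspM : (Matrix.of fun i j : Fin n =>
      x i ^ ((lam j : ℤ) + n - (j : ℕ)) - x i ^ (-((lam j : ℤ) + n - (j : ℕ))))
      = A - B := by
    ext i j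
    rw [hA, hB]
    simp only [Matrix.sub_apply, Matrix.of_apply, ha]
  have hoeM : (Matrix.of fun i j : Fin n =>
      x i ^ (((lam j : ℤ) + 1) + n - 1 - (j : ℕ)) +
        x i ^ (-(((lam j : ℤ) + 1) + n - 1 - (j : ℕ))))
      = A + B := by
    ext i j
    rw [hA, hB]
    simp only [Matrix.add_apply, Matrix.of_apply, ha]
    have he : ((lam j : ℤ) + 1) + n - 1 - (j : ℕ) = (lam j : ℤ) + n - (j : ℕ) := by ring
    rw [he]
  -- assembling
  simp only [schur, spC, oeC]
  rw [hmat1, Matrix.det_mul_column, hprodc, one_mul, hdetG, hV, hspM, hoeM]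
  rw [dif_pos hn, if_neg (show ¬ ((lam ⟨n - 1, by omega⟩ : ℤ) + 1 = 0) from by omega)]
  rw [mul_div_mul_left _ _ hsπ0, div_mul_div_comm]
  congr 1
  ring

/-- s_{(2λ_1+1,λ_1+λ_2+1,…,λ_1+λ_n+1,λ_1-λ_n,…,λ_1-λ_1)}(x,x⁻¹)
  = sp_λ(x) · oe_{(λ_1+1,…,λ_n+1)}(x). -/
theorem schur_factorization_sp_oe {n : ℕ} (hn : 0 < n)
    (lam : Fin n → ℕ) (hlam : Antitone lam) :
    schur (2 * n)
        (fun j => if h : (j : ℕ) < n then (lam ⟨0, hn⟩ : ℤ) + lam ⟨j, h⟩ + 1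
                  else (lam ⟨0, hn⟩ : ℤ) - lam ⟨2 * n - 1 - (j : ℕ), by have := j.isLt; omega⟩)
        (fun i => if h : (i : ℕ) < n then X ⟨i, h⟩
                  else (X ⟨(i : ℕ) - n, by have := i.isLt; omega⟩)⁻¹)
      = spC n (fun j => (lam j : ℤ)) X * oeC n (fun j => (lam j : ℤ) + 1) X := by
  have hx : ∀ i : Fin n, X (n := n) i ≠ 0 := by
    intro i
    simp only [X, ne_eq, map_eq_zero_iff _ (IsFractionRing.injective _ _)]
    exact MvPolynomial.X_ne_zero i
  exact key_schur_sp_oe hn lam X hx _ _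
    (fun j h => by simp [h]) (fun j h => by simp [h])
    (fun i h => by simp [h]) (fun i h => by simp [h])
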